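/- arXiv:1401.4730 — 11 statements merged into one kernel-verified Lean document; each statement's English description precedes it below -/
import Mathlib

section
/- In an interpreted system I, let p be an atomic proposition, i an agent, and p', p'' local propositions of agent i. Suppose for every reachable global state s, if the local interpretation of p'' at l_i(s) is true, then p holds at s if and only if the local interpretation of p' at l_i(s) is true. Then for every reachable state s, if p'' is locally true at l_i(s), then (I,s) satisfies K_i p ∨ K_i ¬p. -/
/-- Local-copy lemma: in an interpreted system, `li` projects global states to
agent `i`'s local states, `Reach` is reachability, `satp s` means the atomic
proposition `p` holds at `s`, and `gp'`, `gp''` are the local interpretations of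
the local propositions `p'` and `p''` of agent `i`.  `K_i φ` holds at `s` iff
`φ` holds at all reachable states with the same local state of agent `i`. -/
theorem local_copy_lemma {S Li : Type} (li : S → Li) (Reach : S → Prop)
    (satp : S → Prop) (gp' gp'' : Li → Bool)
    (hyp : ∀ s, Reach s → gp'' (li s) = true → (satp s ↔ gp' (li s) = true)) :
    ∀ s, Reach s → gp'' (li s) = true →
      ((∀ s', Reach s' → li s' = li s → satp s') ∨
       (∀ s', Reach s' → li s' = li s → ¬ satp s')) := by
  intro s hs hpp
  by_cases h : gp' (li s) = true
  · left
    intro s' hs' hl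
    exact (hyp s' hs' (hl ▸ hpp)).2 (hl ▸ h)
  · right
    intro s' hs' hl hsat
    exact h (hl ▸ (hyp s' hs' (hl ▸ hpp)).1 hsat)
end

section
/- If γ_i(l_i(s), p'') = ⊤ and (I,s) ⊨ p, and for all reachable states the condition 'γ_i(l_i(s),p'')=⊤ implies ((I,s)⊨p ↔ γ_i(l_i(s),p')=⊤)' holds, then (I,s) ⊨ K_i p. -/
/-- First half of the local-copy lemma: if `p''` is locally true at `l_i(s)`,
`p` holds at `s`, and for all reachable states the local-copy condition holds,
then `(I,s) ⊨ K_i p`, i.e. `p` holds at every reachable state epistemically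
accessible (same local state of agent `i`) from `s`. -/
theorem local_copy_knows {S Li : Type} (li : S → Li) (Reach : S → Prop)
    (satp : S → Prop) (gp' gp'' : Li → Bool)
    (hyp : ∀ t, Reach t → gp'' (li t) = true → (satp t ↔ gp' (li t) = true))
    (s : S) (hs : Reach s) (h'' : gp'' (li s) = true) (hp : satp s) :
    ∀ s', Reach s' → li s' = li s → satp s' := by
  intro s' hr heq
  have h1 : gp' (li s) = true := (hyp s hs h'').mp hp
  exact (hyp s' hr (heq ▸ h'')).mpr (heq ▸ h1)
end

section
/- Let H be a simulation relation between interpreted systems I and Ĩ over common propositions Φ̃. Then for every ACTLK formula φ over Φ̃ and every (s, s̃) ∈ H, if (Ĩ, s̃) ⊨ φ then (I, s) ⊨ φ. -/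
/-- ACTLK formulas in negation normal form:
`p | ¬p | φ∧φ | φ∨φ | K_i φ | AXφ | A(φUφ) | A(φRφ)`. -/
inductive ACTLK (Atom Ag : Type) where
  | pos : Atom → ACTLK Atom Ag
  | neg : Atom → ACTLK Atom Ag
  | conj : ACTLK Atom Ag → ACTLK Atom Ag → ACTLK Atom Ag
  | disj : ACTLK Atom Ag → ACTLK Atom Ag → ACTLK Atom Ag
  | know : Ag → ACTLK Atom Ag → ACTLK Atom Ag
  | ax : ACTLK Atom Ag → ACTLK Atom Ag
  | au : ACTLK Atom Ag → ACTLK Atom Ag → ACTLK Atom Ag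
  | ar : ACTLK Atom Ag → ACTLK Atom Ag → ACTLK Atom Ag

/-- An infinite path of the labelled transition relation `step`. -/
def IsPath {S A : Type} (step : S → A → S → Prop) (π : ℕ → S) : Prop :=
  ∀ n, ∃ a, step (π n) a (π (n + 1))

/-- Satisfaction of ACTLK formulas over a model given by a labelled transition
relation `step`, epistemic accessibility relations `eps` (which already
incorporate reachability), and an interpretation `val` of atoms. -/
def Sat {S A Ag Atom : Type} (step : S → A → S → Prop)
    (eps : Ag → S → S → Prop) (val : S → Atom → Bool) :
    ACTLK Atom Ag → S → Prop
  | .pos p, s => val s p = true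
  | .neg p, s => val s p = false
  | .conj φ ψ, s => Sat step eps val φ s ∧ Sat step eps val ψ s
  | .disj φ ψ, s => Sat step eps val φ s ∨ Sat step eps val ψ s
  | .know i φ, s => ∀ t, eps i s t → Sat step eps val φ t
  | .ax φ, s => ∀ a t, step s a t → Sat step eps val φ t
  | .au φ ψ, s => ∀ π : ℕ → S, π 0 = s → IsPath step π →
      ∃ i, Sat step eps val ψ (π i) ∧ ∀ j < i, Sat step eps val φ (π j)
  | .ar φ ψ, s => ∀ π : ℕ → S, π 0 = s → IsPath step π →
      ∀ i, (∀ j < i, ¬ Sat step eps val φ (π j)) → Sat step eps val ψ (π i)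

theorem lift_path {S S' A A' : Type} (step : S → A → S → Prop)
    (step' : S' → A' → S' → Prop) (H : S → S' → Prop)
    (hstep : ∀ s s' a t, H s s' → step s a t → ∃ a' t', step' s' a' t' ∧ H t t')
    (π : ℕ → S) (hπ : IsPath step π) (s' : S') (h0 : H (π 0) s') :
    ∃ π' : ℕ → S', π' 0 = s' ∧ IsPath step' π' ∧ ∀ n, H (π n) (π' n) := by
  classical
  have key : ∀ n (x : S'), H (π n) x →
      ∃ y : S', (∃ a', step' x a' y) ∧ H (π (n + 1)) y := by
    intro n x hx
    obtain ⟨a, ha⟩ := hπ n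
    obtain ⟨a', t', hst, hHt⟩ := hstep _ _ _ _ hx ha
    exact ⟨t', ⟨a', hst⟩, hHt⟩
  let F : ∀ n, {x : S' // H (π n) x} := fun n =>
    Nat.rec ⟨s', h0⟩ (fun n p => ⟨Classical.choose (key n p.1 p.2),
      (Classical.choose_spec (key n p.1 p.2)).2⟩) n
  exact ⟨fun n => (F n).1, rfl,
    fun n => (Classical.choose_spec (key n (F n).1 (F n).2)).1,
    fun n => (F n).2⟩

/-- Proposition 1 (core): if `H` is a simulation relation between interpreted
systems `I` and `Ĩ` over the common propositions, then for every ACTLK formula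
`φ` and `(s, s̃) ∈ H`, satisfaction of `φ` at `s̃` in `Ĩ` implies satisfaction
at `s` in `I`. -/
theorem actlk_preserved_by_simulation {S S' A A' Ag Atom : Type}
    (step : S → A → S → Prop) (step' : S' → A' → S' → Prop)
    (eps : Ag → S → S → Prop) (eps' : Ag → S' → S' → Prop)
    (val : S → Atom → Bool) (val' : S' → Atom → Bool)
    (H : S → S' → Prop)
    (hagree : ∀ s s', H s s' → ∀ p, val s p = val' s' p)
    (hstep : ∀ s s' a t, H s s' → step s a t → ∃ a' t', step' s' a' t' ∧ H t t')
    (heps : ∀ i s s' t, H s s' → eps i s t → ∃ t', eps' i s' t' ∧ H t t')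
    (φ : ACTLK Atom Ag) (s : S) (s' : S') (hH : H s s')
    (hsat : Sat step' eps' val' φ s') : Sat step eps val φ s := by
  induction φ generalizing s s' with
  | pos p => simp only [Sat] at hsat ⊢; rw [hagree s s' hH p]; exact hsat
  | neg p => simp only [Sat] at hsat ⊢; rw [hagree s s' hH p]; exact hsat
  | conj φ ψ ihφ ihψ =>
    exact ⟨ihφ s s' hH hsat.1, ihψ s s' hH hsat.2⟩
  | disj φ ψ ihφ ihψ =>
    cases hsat with
    | inl h => exact Or.inl (ihφ s s' hH h)
    | inr h => exact Or.inr (ihψ s s' hH h)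
  | know i φ ih =>
    intro t ht
    obtain ⟨t', ht', hHt⟩ := heps i s s' t hH ht
    exact ih t t' hHt (hsat t' ht')
  | ax φ ih =>
    intro a t hst
    obtain ⟨a', t', hst', hHt⟩ := hstep s s' a t hH hst
    exact ih t t' hHt (hsat a' t' hst')
  | au φ ψ ihφ ihψ =>
    intro π hπ0 hπ
    obtain ⟨π', hπ'0, hπ', hHn⟩ :=
      lift_path step step' H hstep π hπ s' (hπ0 ▸ hH)
    obtain ⟨i, hψ', hφ'⟩ := hsat π' hπ'0 hπ'
    exact ⟨i, ihψ _ _ (hHn i) hψ', fun j hj => ihφ _ _ (hHn j) (hφ' j hj)⟩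
  | ar φ ψ ihφ ihψ =>
    intro π hπ0 hπ i hi
    obtain ⟨π', hπ'0, hπ', hHn⟩ :=
      lift_path step step' H hstep π hπ s' (hπ0 ▸ hH)
    refine ihψ _ _ (hHn i) (hsat π' hπ'0 hπ' i ?_)
    intro j hj h'
    exact hi j hj (ihφ _ _ (hHn j) h')
end

section
/- If I ⪯ Ĩ (Ĩ simulates I via relation H) and Ĩ ⊨ φ for an ACTLK formula φ over the common propositions, then I ⊨ φ, where M ⊨ φ means φ holds at all initial states of M. -/
lemma path_lift {S S' A A' : Type}
    {step : S → A → S → Prop} {step' : S' → A' → S' → Prop}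
    {H : S → S' → Prop}
    (hstep : ∀ s s' a t, H s s' → step s a t → ∃ a' t', step' s' a' t' ∧ H t t')
    {s : S} {s' : S'} (h : H s s') {π : ℕ → S}
    (hπ0 : π 0 = s) (hπ : IsPath step π) :
    ∃ π' : ℕ → S', π' 0 = s' ∧ IsPath step' π' ∧ ∀ n, H (π n) (π' n) := by
  have key : ∀ n (t' : S'), H (π n) t' →
      ∃ u' : S', H (π (n+1)) u' ∧ ∃ a', step' t' a' u' := by
    intro n t' ht
    obtain ⟨a, ha⟩ := hπ n
    obtain ⟨a', u', hs', hu⟩ := hstep _ _ _ _ ht ha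
    exact ⟨u', hu, a', hs'⟩
  let f : ∀ n : ℕ, {t' : S' // H (π n) t'} := fun n =>
    Nat.rec ⟨s', hπ0 ▸ h⟩
      (fun n ih => ⟨(key n ih.1 ih.2).choose, (key n ih.1 ih.2).choose_spec.1⟩) n
  refine ⟨fun n => (f n).1, rfl, ?_, fun n => (f n).2⟩
  intro n
  exact (key n (f n).1 (f n).2).choose_spec.2

lemma lift_sat {S S' A A' Ag Atom : Type}
    {step : S → A → S → Prop} {step' : S' → A' → S' → Prop}
    {eps : Ag → S → S → Prop} {eps' : Ag → S' → S' → Prop}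
    {val : S → Atom → Bool} {val' : S' → Atom → Bool}
    {H : S → S' → Prop}
    (hagree : ∀ s s', H s s' → ∀ p, val s p = val' s' p)
    (hstep : ∀ s s' a t, H s s' → step s a t → ∃ a' t', step' s' a' t' ∧ H t t')
    (heps : ∀ i s s' t, H s s' → eps i s t → ∃ t', eps' i s' t' ∧ H t t') :
    ∀ (φ : ACTLK Atom Ag) (s : S) (s' : S'), H s s' →
      Sat step' eps' val' φ s' → Sat step eps val φ s := by
  intro φ
  induction φ with
  | pos p =>
    intro s s' h hs
    simpa [Sat, hagree s s' h p] using hs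
  | neg p =>
    intro s s' h hs
    simpa [Sat, hagree s s' h p] using hs
  | conj φ ψ ihφ ihψ =>
    intro s s' h hs
    exact ⟨ihφ s s' h hs.1, ihψ s s' h hs.2⟩
  | disj φ ψ ihφ ihψ =>
    intro s s' h hs
    exact hs.elim (fun h1 => Or.inl (ihφ s s' h h1)) (fun h1 => Or.inr (ihψ s s' h h1))
  | know i φ ih =>
    intro s s' h hs t ht
    obtain ⟨t', ht', hH⟩ := heps i s s' t h ht
    exact ih t t' hH (hs t' ht')
  | ax φ ih =>
    intro s s' h hs a t ht
    obtain ⟨a', t', ht', hH⟩ := hstep s s' a t h ht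
    exact ih t t' hH (hs a' t' ht')
  | au φ ψ ihφ ihψ =>
    intro s s' h hs π hπ0 hπ
    obtain ⟨π', hπ'0, hπ', hHn⟩ := path_lift hstep h hπ0 hπ
    obtain ⟨i, hψi, hφj⟩ := hs π' hπ'0 hπ'
    exact ⟨i, ihψ _ _ (hHn i) hψi, fun j hj => ihφ _ _ (hHn j) (hφj j hj)⟩
  | ar φ ψ ihφ ihψ =>
    intro s s' h hs π hπ0 hπ i hi
    obtain ⟨π', hπ'0, hπ', hHn⟩ := path_lift hstep h hπ0 hπ
    refine ihψ _ _ (hHn i) (hs π' hπ'0 hπ' i fun j hj hφ' => hi j hj (ihφ _ _ (hHn j) hφ'))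

/-- Proposition 1: if `I ⪯ Ĩ` via a simulation relation `H` (initial states of
`I` are `H`-related to initial states of `Ĩ`, `H`-related states agree on the
common atomic propositions, and `H` is preserved forward along temporal and
epistemic transitions) and `Ĩ ⊨ φ` for an ACTLK formula `φ`, then `I ⊨ φ`,
where `M ⊨ φ` means `φ` holds at all initial states of `M`. -/
theorem actlk_model_preserved_by_simulation {S S' A A' Ag Atom : Type}
    (step : S → A → S → Prop) (step' : S' → A' → S' → Prop)
    (eps : Ag → S → S → Prop) (eps' : Ag → S' → S' → Prop)
    (val : S → Atom → Bool) (val' : S' → Atom → Bool)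
    (S0 : Set S) (S0' : Set S')
    (H : S → S' → Prop)
    (hinit : ∀ s ∈ S0, ∃ s' ∈ S0', H s s')
    (hagree : ∀ s s', H s s' → ∀ p, val s p = val' s' p)
    (hstep : ∀ s s' a t, H s s' → step s a t → ∃ a' t', step' s' a' t' ∧ H t t')
    (heps : ∀ i s s' t, H s s' → eps i s t → ∃ t', eps' i s' t' ∧ H t t')
    (φ : ACTLK Atom Ag)
    (hsat : ∀ s' ∈ S0', Sat step' eps' val' φ s') :
    ∀ s ∈ S0, Sat step eps val φ s := by
  intro s hs
  obtain ⟨s', hs', hH⟩ := hinit s hs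
  exact lift_sat hagree hstep heps φ s s' hH (hsat s' hs')
end

section
/- Given a policy C with concrete derived interpreted system I_C and the abstract interpreted system Ĩ_C obtained by hiding propositions Φ∖Φ̃ (local states factored by agreement on visible propositions Φ̃_i, actions grouped into classes with effects restricted to Φ̃ and guards existentially quantified over hidden propositions), the function h mapping each concrete global state s to (h_i(l_i(s)))_{i∈Ω} is a simulation relation between I_C and Ĩ_C; hence I_C ⪯ Ĩ_C. -/
/-- An instantiated policy action: the agent performing it, its guard
(permission) over global states, and its effect (`some true` for `+p`,
`some false` for `-p`, `none` when `p` does not occur in the effect). -/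
structure PAction (Atom Ag : Type) where
  ag : Ag
  guard : (Atom → Bool) → Prop
  eff : Atom → Option Bool

/-- Abstract states: valuations of the visible propositions `Φ̃`. -/
def AState {Atom : Type} (Vis : Set Atom) : Type := {p // p ∈ Vis} → Bool

/-- The abstraction function `h`: restriction of a valuation to visible atoms. -/
def habs {Atom : Type} (Vis : Set Atom) (s : Atom → Bool) : AState Vis :=
  fun p => s p.1

/-- Concrete transition: the guard holds and the state is updated by the effect. -/
def cstep {Atom Ag Act : Type} (acts : Act → PAction Atom Ag)
    (s : Atom → Bool) (a : Act) (s' : Atom → Bool) : Prop :=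
  (acts a).guard s ∧ ∀ p, s' p = ((acts a).eff p).getD (s p)

/-- Abstract transition for the action class `[a]`: the guard is the Boolean
existential quantification `∃(Φ∖Φ̃).ℓ` of the concrete guard over the hidden
propositions, and the effect is restricted to visible propositions. -/
def astep {Atom Ag Act : Type} (Vis : Set Atom) (acts : Act → PAction Atom Ag)
    (t : AState Vis) (a : Act) (t' : AState Vis) : Prop :=
  (∃ s : Atom → Bool, habs Vis s = t ∧ (acts a).guard s) ∧
    ∀ p : {p // p ∈ Vis}, t' p = ((acts a).eff p.1).getD (t p)

/-- Reachability in the concrete derived interpreted system. -/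
inductive CReach {Atom Ag Act : Type} (acts : Act → PAction Atom Ag)
    (S0 : Set (Atom → Bool)) : (Atom → Bool) → Prop
  | base {s} : s ∈ S0 → CReach acts S0 s
  | step {s a s'} : CReach acts S0 s → cstep acts s a s' → CReach acts S0 s'

/-- Reachability in the abstract interpreted system (initial states are the
images of concrete initial states under `h`). -/
inductive AReach {Atom Ag Act : Type} (Vis : Set Atom)
    (acts : Act → PAction Atom Ag) (S0 : Set (Atom → Bool)) : AState Vis → Prop
  | base {t} : t ∈ habs Vis '' S0 → AReach Vis acts S0 t
  | step {t a t'} : AReach Vis acts S0 t → astep Vis acts t a t' →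
      AReach Vis acts S0 t'

/-- Concrete epistemic accessibility of agent `i`: both states reachable and
agreeing on all propositions local to `i` (those owned by `i`). -/
def ceps {Atom Ag Act : Type} (own : Atom → Ag) (acts : Act → PAction Atom Ag)
    (S0 : Set (Atom → Bool)) (i : Ag) (s s' : Atom → Bool) : Prop :=
  CReach acts S0 s ∧ CReach acts S0 s' ∧ ∀ p, own p = i → s p = s' p

/-- Abstract epistemic accessibility of agent `i`. -/
def aeps {Atom Ag Act : Type} (own : Atom → Ag) (Vis : Set Atom)
    (acts : Act → PAction Atom Ag) (S0 : Set (Atom → Bool)) (i : Ag)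
    (t t' : AState Vis) : Prop :=
  AReach Vis acts S0 t ∧ AReach Vis acts S0 t' ∧
    ∀ p : {p // p ∈ Vis}, own p.1 = i → t p = t' p


lemma hstep {Atom Ag Act : Type} (Vis : Set Atom) (acts : Act → PAction Atom Ag)
    (s : Atom → Bool) (a : Act) (s' : Atom → Bool) (h : cstep acts s a s') :
    astep Vis acts (habs Vis s) a (habs Vis s') :=
  ⟨⟨s, rfl, h.1⟩, fun p => h.2 p.1⟩

lemma hreach {Atom Ag Act : Type} (Vis : Set Atom) (acts : Act → PAction Atom Ag)
    (S0 : Set (Atom → Bool)) {s : Atom → Bool} (h : CReach acts S0 s) :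
    AReach Vis acts S0 (habs Vis s) := by
  induction h with
  | base hs => exact AReach.base ⟨_, hs, rfl⟩
  | step _ hst ih => exact AReach.step ih (hstep Vis acts _ _ _ hst)

/-- Proposition 2: for a policy-derived interpreted system `I_C` and its
variable-hiding abstraction `Ĩ_C`, the function `h` mapping each concrete
state to the tuple of its agents' quotient local states is a simulation
relation: (1) initial states map to abstract initial states, (2) `h`-related
states agree on visible propositions, (3) every concrete transition is matched
by an abstract transition of the corresponding abstract action, (4) every
concrete epistemic transition is matched abstractly.  Hence `I_C ⪯ Ĩ_C`. -/
theorem abstraction_is_simulation {Atom Ag Act : Type} (own : Atom → Ag)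
    (Vis : Set Atom) (acts : Act → PAction Atom Ag)
    (S0 : Set (Atom → Bool)) :
    (∀ s ∈ S0, habs Vis s ∈ habs Vis '' S0) ∧
    (∀ (s : Atom → Bool) (p : {p // p ∈ Vis}), s p.1 = habs Vis s p) ∧
    (∀ (s : Atom → Bool) (a : Act) (s' : Atom → Bool),
      cstep acts s a s' → astep Vis acts (habs Vis s) a (habs Vis s')) ∧
    (∀ (i : Ag) (s s' : Atom → Bool), ceps own acts S0 i s s' →
      aeps own Vis acts S0 i (habs Vis s) (habs Vis s')) := by
  refine ⟨fun s hs => ⟨s, hs, rfl⟩, fun s p => rfl, hstep Vis acts,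
    fun i s s' ⟨h1, h2, h3⟩ =>
      ⟨hreach Vis acts S0 h1, hreach Vis acts S0 h2, fun p hp => h3 p.1 hp⟩⟩
end

section
/- Soundness of forward temporal path checking: let π̃ be a temporal path in the abstract model from s̃₁ to s̃ₙ. If st₁ ⊆ h⁻¹(s̃₁) and the sequence of TemporalCheck transitions (π̃, st₁) ⇒*_t (s̃ₙ, stₙ) yields a nonempty set stₙ, then there exists a concrete path starting from a state in st₁ and ending in a state in stₙ. -/
/-- An edge label of an abstract counterexample path: a temporal transition
labelled by an abstract action, or an epistemic transition labelled by an
agent. -/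
inductive Edge (Act' Ag : Type) where
  | temp : Act' → Edge Act' Ag
  | epi : Ag → Edge Act' Ag

/-- The data of a concrete interpreted system together with its abstraction:
concrete states `S` with labelled transitions `step`, local-state projections
`loc`, reachable states `Reach`, initial states `S0`; abstract states `S'`
with transitions `astep`, epistemic relations `aeps`, and abstract initial
states `aS0`; the abstraction function `h` on states and `hA` on actions. -/
structure Frame (S S' Act Act' Ag L : Type) where
  step : S → Act → S → Prop
  loc : Ag → S → L
  Reach : Set S
  S0 : Set S
  astep : S' → Act' → S' → Prop
  aeps : Ag → S' → S' → Prop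
  aS0 : Set S'
  h : S → S'
  hA : Act → Act'

variable {S S' Act Act' Ag L : Type}

/-- One forward transition rule: `TemporalCheck` takes all successors of `st`
under concrete actions mapping to the abstract action, intersected with the
preimage of the target abstract state; `EpistemicCheck` takes the reachable
concrete states in the preimage of the target that share the agent's local
state with some state in `st` (the union-over-all-witness-paths variant, i.e.
the reachable concrete states over the target abstract state). -/
def FwdStep (F : Frame S S' Act Act' Ag L) :
    Edge Act' Ag → S' → Set S → Set S
  | Edge.temp aa, tgt, st =>
      {t | (∃ s ∈ st, ∃ a, F.hA a = aa ∧ F.step s a t) ∧ F.h t = tgt}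
  | Edge.epi ag, tgt, st =>
      {t | t ∈ F.Reach ∧ F.h t = tgt ∧ ∃ s ∈ st, F.loc ag s = F.loc ag t}

/-- The forward traversal `⇒*` along an abstract path, given as the list of
its edges paired with their target abstract states. -/
def Fwd (F : Frame S S' Act Act' Ag L) :
    List (Edge Act' Ag × S') → Set S → Set S
  | [], st => st
  | (e, tgt) :: rest, st => Fwd F rest (FwdStep F e tgt st)

/-- The abstract path starting at `src` with the given edges is a path of the
abstract model. -/
def AValid (F : Frame S S' Act Act' Ag L) :
    S' → List (Edge Act' Ag × S') → Prop
  | _, [] => True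
  | src, (Edge.temp aa, tgt) :: rest => F.astep src aa tgt ∧ AValid F tgt rest
  | src, (Edge.epi ag, tgt) :: rest => F.aeps ag src tgt ∧ AValid F tgt rest

/-- `CPath F s pi t`: there is a concrete path from `s` to `t` corresponding to
the abstract path with edge list `pi`: states map under `h` to the abstract
states, temporal transitions are matched by concrete actions in `h_A⁻¹`, and
epistemic transitions by concrete epistemic relations (equality of the agent's
local states) with reachable targets. -/
inductive CPath (F : Frame S S' Act Act' Ag L) :
    S → List (Edge Act' Ag × S') → S → Prop
  | nil (s : S) : CPath F s [] s
  | temp {s t u : S} {aa : Act'} {a : Act} {tgt : S'}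
      {rest : List (Edge Act' Ag × S')} :
      F.hA a = aa → F.step s a t → F.h t = tgt → CPath F t rest u →
      CPath F s ((Edge.temp aa, tgt) :: rest) u
  | epi {s t u : S} {ag : Ag} {tgt : S'} {rest : List (Edge Act' Ag × S')} :
      t ∈ F.Reach → F.h t = tgt → F.loc ag s = F.loc ag t → CPath F t rest u →
      CPath F s ((Edge.epi ag, tgt) :: rest) u

/-- Proposition 3 (soundness of `⇒*_t`): let `pi` be a temporal path in the
abstract model starting at `src`.  If `st₁ ⊆ h⁻¹(src)` and the forward
temporal traversal of `pi` from `st₁` yields a nonempty set, then there is a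
concrete path corresponding to `pi` from a state in `st₁` to a state in the
resulting set. -/
theorem fwd_temporal_sound (F : Frame S S' Act Act' Ag L) (src : S')
    (pi : List (Edge Act' Ag × S'))
    (hvalid : AValid F src pi)
    (htemp : ∀ e ∈ pi, ∃ aa : Act', e.1 = Edge.temp aa)
    (st1 : Set S) (hsub : ∀ s ∈ st1, F.h s = src)
    (hne : (Fwd F pi st1).Nonempty) :
    ∃ s ∈ st1, ∃ t ∈ Fwd F pi st1, CPath F s pi t := by
  induction pi generalizing src st1 with
  | nil =>
    obtain ⟨t, ht⟩ := hne
    exact ⟨t, ht, t, ht, CPath.nil t⟩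
  | cons p rest ih =>
    obtain ⟨e, tgt⟩ := p
    obtain ⟨aa, hae⟩ := htemp (e, tgt) List.mem_cons_self
    simp only at hae
    subst hae
    have hvalid' : AValid F tgt rest := hvalid.2
    have hsub' : ∀ s ∈ FwdStep F (Edge.temp aa) tgt st1, F.h s = tgt :=
      fun s hs => hs.2
    have htemp' : ∀ e ∈ rest, ∃ aa : Act', e.1 = Edge.temp aa :=
      fun e he => htemp e (List.mem_cons_of_mem _ he)
    obtain ⟨s', hs', t, ht, hpath⟩ := ih tgt hvalid' htemp' _ hsub' hne
    obtain ⟨⟨s, hs, a, hha, hstep⟩, hh⟩ := hs'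
    exact ⟨s, hs, t, ht, CPath.temp hha hstep hh hpath⟩
end

section
/- Soundness of forward path checking with epistemic transitions: let π̃ = s̃₁ → ... → s̃ₙ be a path in the abstract model possibly containing both temporal and epistemic transitions. If st₁ ⊆ h⁻¹(s̃₁) and (π̃, st₁) ⇒* (s̃ₙ, stₙ) with stₙ nonempty, then there exists a concrete path corresponding to π̃ that starts in st₁ and ends in stₙ. -/
variable {S S' Act Act' Ag L : Type}

/-- Proposition 4 (soundness of `⇒*`): let `pi` be a path in the abstract
model starting at `src`, possibly containing both temporal and epistemic
transitions.  If `st₁ ⊆ h⁻¹(src)` and the forward traversal of `pi` from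
`st₁` yields a nonempty set, then there is a concrete path corresponding to
`pi` from a state in `st₁` to a state in the resulting set. -/
theorem fwd_sound (F : Frame S S' Act Act' Ag L) (src : S')
    (pi : List (Edge Act' Ag × S'))
    (hvalid : AValid F src pi)
    (st1 : Set S) (hsub : ∀ s ∈ st1, F.h s = src)
    (hne : (Fwd F pi st1).Nonempty) :
    ∃ s ∈ st1, ∃ t ∈ Fwd F pi st1, CPath F s pi t := by
  induction pi generalizing src st1 with
  | nil => obtain ⟨t, ht⟩ := hne; exact ⟨t, ht, t, ht, CPath.nil t⟩
  | cons p rest ih =>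
    obtain ⟨e, tgt⟩ := p
    cases e with
    | temp aa =>
      obtain ⟨hstep, hv⟩ := hvalid
      obtain ⟨s', hs', t, ht, hpath⟩ := ih tgt hv (FwdStep F (Edge.temp aa) tgt st1)
        (fun s hs => hs.2) hne
      obtain ⟨⟨s, hs, a, ha, hst⟩, hh⟩ := hs'
      exact ⟨s, hs, t, ht, CPath.temp ha hst hh hpath⟩
    | epi ag =>
      obtain ⟨hstep, hv⟩ := hvalid
      obtain ⟨s', hs', t, ht, hpath⟩ := ih tgt hv (FwdStep F (Edge.epi ag) tgt st1)
        (fun s hs => hs.2.1) hne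
      obtain ⟨hr, hh, s, hs, hloc⟩ := hs'
      exact ⟨s, hs, t, ht, CPath.epi hr hh hloc hpath⟩
end

section
/- Completeness of forward path checking: let π̃ = s̃₁ → ... → s̃ₙ be a path in the abstract model. If there exists a concrete path π = s₁ → ... → sₙ corresponding to π̃ and s₁ ∈ st₁ ⊆ h⁻¹(s̃₁), then (π̃, st₁) ⇒* (s̃ₙ, stₙ) for some nonempty stₙ; moreover sₙ ∈ stₙ. -/
variable {S S' Act Act' Ag L : Type}

theorem fwd_mem (F : Frame S S' Act Act' Ag L) :
    ∀ (pi : List (Edge Act' Ag × S')) (s1 t : S) (st1 : Set S),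
    s1 ∈ st1 → CPath F s1 pi t → t ∈ Fwd F pi st1 := by
  intro pi s1 t st1 hs1 hc
  induction hc generalizing st1 with
  | nil s => exact hs1
  | temp ha hstep hh _ ih =>
    exact ih _ ⟨⟨_, hs1, _, ha, hstep⟩, hh⟩
  | epi hr hh hl _ ih =>
    exact ih _ ⟨hr, hh, _, hs1, hl⟩

/-- Proposition 5 (completeness of `⇒*`): if the abstract path `pi` from `src`
has a corresponding concrete path from `s₁` to `t`, and `s₁ ∈ st₁ ⊆ h⁻¹(src)`,
then the forward traversal of `pi` from `st₁` yields a nonempty set; moreover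
the final concrete state `t` belongs to it. -/
theorem fwd_complete (F : Frame S S' Act Act' Ag L) (src : S')
    (pi : List (Edge Act' Ag × S'))
    (hvalid : AValid F src pi)
    (st1 : Set S) (hsub : ∀ s ∈ st1, F.h s = src)
    (s1 t : S) (hs1 : s1 ∈ st1) (hc : CPath F s1 pi t) :
    t ∈ Fwd F pi st1 ∧ (Fwd F pi st1).Nonempty := have h := fwd_mem F pi s1 t st1 hs1 hc
  ⟨h, t, h⟩
end

section
/- Completeness of tree-like counterexample checking: if an abstract tree-like counterexample c̃e corresponds to a concrete counterexample ce, then (1) every path of c̃e satisfies (π̃, S₀ ∩ h⁻¹(root)) ⇒* (s̃', st) with st nonempty, and (2) for every vertex s̃ of c̃e, r_{s̃}^{c̃e} ≠ ∅; indeed the concrete state corresponding to s̃ belongs to r_{s̃}^{π̃} for every path π̃ ∈ c̃e. -/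
variable {S S' Act Act' Ag L : Type}

/-- `CTrace F s pi tr`: `tr` is the list of successive concrete states of a
concrete path from `s` corresponding to the abstract edge list `pi`
(one concrete state per abstract edge target). -/
inductive CTrace (F : Frame S S' Act Act' Ag L) :
    S → List (Edge Act' Ag × S') → List S → Prop
  | nil (s : S) : CTrace F s [] []
  | temp {s t : S} {aa : Act'} {a : Act} {tgt : S'}
      {rest : List (Edge Act' Ag × S')} {tr : List S} :
      F.hA a = aa → F.step s a t → F.h t = tgt → CTrace F t rest tr →
      CTrace F s ((Edge.temp aa, tgt) :: rest) (t :: tr)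
  | epi {s t : S} {ag : Ag} {tgt : S'} {rest : List (Edge Act' Ag × S')}
      {tr : List S} :
      t ∈ F.Reach → F.h t = tgt → F.loc ag s = F.loc ag t → CTrace F t rest tr →
      CTrace F s ((Edge.epi ag, tgt) :: rest) (t :: tr)

/-- The vertices of an abstract path with root `root`. -/
def verts (root : S') (pi : List (Edge Act' Ag × S')) : List S' :=
  root :: pi.map Prod.snd

open Classical in
/-- `r_{v}^{pi}`: the set of reachable concrete states in `h⁻¹(v)` lying (at
the position of the vertex `v`) on some concrete path corresponding to the
abstract counterexample path `pi`, starting at a concrete initial state over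
`root`.  For `v` not a vertex of `pi`, it is stipulated to be `h⁻¹(v)`. -/
noncomputable def rset (F : Frame S S' Act Act' Ag L) (root : S')
    (pi : List (Edge Act' Ag × S')) (v : S') : Set S :=
  if v ∈ verts root pi then
    {x | ∃ (s0 : S) (tr : List S), s0 ∈ F.S0 ∧ F.h s0 = root ∧
      CTrace F s0 pi tr ∧
      ∃ i : ℕ, (verts root pi)[i]? = some v ∧ (s0 :: tr)[i]? = some x}
  else F.h ⁻¹' {v}

/-- A vertex of a tree-like counterexample given by a root and a list of
paths. -/
def IsVert (root : S') (paths : List (List (Edge Act' Ag × S'))) (v : S') :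
    Prop :=
  v = root ∨ ∃ pi ∈ paths, v ∈ pi.map Prod.snd

lemma fwd_nonempty {S S' Act Act' Ag L : Type} (F : Frame S S' Act Act' Ag L) :
    ∀ {s0 : S} {pi : List (Edge Act' Ag × S')} {tr : List S},
      CTrace F s0 pi tr → ∀ st : Set S, s0 ∈ st → (Fwd F pi st).Nonempty := by
  intro s0 pi tr hct
  induction hct with
  | nil s => intro st hs; exact ⟨s, hs⟩
  | temp hA hstep hh _ ih =>
    intro st hs
    exact ih _ ⟨⟨_, hs, _, hA, hstep⟩, hh⟩
  | epi hR hh hloc _ ih =>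
    intro st hs
    exact ih _ ⟨hR, hh, _, hs, hloc⟩

/-- Proposition 7 (completeness of tree-like counterexample checking): if the
abstract tree-like counterexample (root `root`, paths `paths`) corresponds to
a concrete counterexample — a choice `σ` of one concrete state per abstract
vertex with `σ root` initial, and for each path a corresponding concrete trace
passing exactly through the chosen states — then (1) every path passes forward
checking from `S₀ ∩ h⁻¹(root)` with a nonempty result, and (2) for every
vertex `v`, `r_v^{ce} ≠ ∅`; indeed `σ v` belongs to `r_v^{pi}` for every path
`pi` of the counterexample. -/
theorem counterexample_check_complete (F : Frame S S' Act Act' Ag L)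
    (root : S') (hroot : root ∈ F.aS0)
    (paths : List (List (Edge Act' Ag × S')))
    (hpaths : ∀ pi ∈ paths, AValid F root pi)
    (σ : S' → S)
    (hσ0 : σ root ∈ F.S0)
    (hσh : ∀ v : S', IsVert root paths v → F.h (σ v) = v)
    (htr : ∀ pi ∈ paths, ∃ tr : List S, CTrace F (σ root) pi tr ∧
      ∀ (i : ℕ) (v : S'), (verts root pi)[i]? = some v →
        (σ root :: tr)[i]? = some (σ v)) :
    (∀ pi ∈ paths, (Fwd F pi (F.S0 ∩ F.h ⁻¹' {root})).Nonempty) ∧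
    (∀ v : S', IsVert root paths v →
      (∀ pi ∈ paths, σ v ∈ rset F root pi v) ∧
      (⋂ pi ∈ paths, rset F root pi v).Nonempty) := by
  have key : ∀ pi ∈ paths, ∀ v : S', IsVert root paths v → σ v ∈ rset F root pi v := by
    intro pi hpi v hv
    by_cases hmem : v ∈ verts root pi
    · rw [rset, if_pos hmem]
      obtain ⟨i, hi⟩ := List.mem_iff_getElem?.mp hmem
      obtain ⟨tr, hct, hidx⟩ := htr pi hpi
      exact ⟨σ root, tr, hσ0, hσh root (Or.inl rfl), hct, i, hi, hidx i v hi⟩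
    · rw [rset, if_neg hmem]
      exact hσh v hv
  refine ⟨?_, ?_⟩
  · intro pi hpi
    obtain ⟨tr, hct, -⟩ := htr pi hpi
    exact fwd_nonempty F hct _ ⟨hσ0, hσh root (Or.inl rfl)⟩
  · intro v hv
    refine ⟨fun pi hpi => key pi hpi v hv, ⟨σ v, ?_⟩⟩
    simp only [Set.mem_iInter]
    exact fun pi hpi => key pi hpi v hv
end

section
/- If (π̃, S₀ ∩ h⁻¹(s̃₀)) ⇒* (s̃ₙ, stₙ) for a path π̃ = s̃₀ → ... → s̃ₙ in the abstract model starting at an abstract initial state s̃₀, and stₙ ≠ ∅, then there is a concrete path corresponding to π̃ beginning at a concrete initial state s₀ ∈ S₀ ∩ h⁻¹(s̃₀) and ending at some state in stₙ. -/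
variable {S S' Act Act' Ag L : Type}

theorem fwd_sound_aux (F : Frame S S' Act Act' Ag L) :
    ∀ (pi : List (Edge Act' Ag × S')) (st : Set S) (t : S),
      t ∈ Fwd F pi st → ∃ s ∈ st, CPath F s pi t := by
  intro pi
  induction pi with
  | nil => intro st t ht; exact ⟨t, ht, CPath.nil t⟩
  | cons p rest ih =>
    intro st t ht
    obtain ⟨e, tgt⟩ := p
    obtain ⟨m, hm, hpath⟩ := ih (FwdStep F e tgt st) t ht
    cases e with
    | temp aa =>
      obtain ⟨⟨s, hs, a, ha, hstep⟩, hh⟩ := hm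
      exact ⟨s, hs, CPath.temp ha hstep hh hpath⟩
    | epi ag =>
      obtain ⟨hr, hh, s, hs, hl⟩ := hm
      exact ⟨s, hs, CPath.epi hr hh hl hpath⟩

/-- If the forward traversal of an abstract path `pi` starting at an abstract
initial state `src`, from the set `S₀ ∩ h⁻¹(src)`, yields a nonempty set
`stₙ`, then there is a concrete path corresponding to `pi` beginning at a
concrete initial state in `S₀ ∩ h⁻¹(src)` and ending at some state in `stₙ`. -/
theorem fwd_sound_from_initial (F : Frame S S' Act Act' Ag L) (src : S')
    (hsrc : src ∈ F.aS0)
    (pi : List (Edge Act' Ag × S'))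
    (hvalid : AValid F src pi)
    (hne : (Fwd F pi (F.S0 ∩ F.h ⁻¹' {src})).Nonempty) :
    ∃ s0 ∈ F.S0 ∩ F.h ⁻¹' {src},
      ∃ t ∈ Fwd F pi (F.S0 ∩ F.h ⁻¹' {src}), CPath F s0 pi t := by
  obtain ⟨t, ht⟩ := hne
  obtain ⟨s0, hs0, hp⟩ := fwd_sound_aux F pi _ t ht
  exact ⟨s0, hs0, t, ht, hp⟩
end

section
/- If Ĩ is an abstraction of I via abstraction function h (a functional simulation), the formula φ within a knowledge operator is purely propositional over the visible propositions, and there exists a reachable concrete state s' with s' ∼_a s and (I, s') ⊨ ¬φ, then (I, s) ⊨ ¬K_a φ; moreover (Ĩ, h(s')) ⊨ ¬φ and h(s) ∼_a h(s') in the abstract model whenever h(s), h(s') are reachable, so (Ĩ, h(s)) ⊨ ¬K_a φ. -/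
/-- Refuting a knowledge property through a functional abstraction.  Concrete
system: states `S`, reachability `Reach`, local states `loc` of agent `a`,
interpretation `val` of the visible atoms; abstract system: states `S'`,
`Reach'`, `loc'`, `val'`; `h` is a functional simulation, so `h`-related
states agree on visible propositions (`hagree`) and `h` preserves equality of
agent `a`'s local states (`hloc`).  `φ` is a purely propositional formula over
the visible atoms, evaluated via the atom-valuation of a state; `s ∼_a s'` is
equality of `a`'s local states between reachable states, and `K_a φ` holds at
`s` iff `φ` holds at all reachable states accessible from `s`.

If there is a reachable concrete state `s'` with `s' ∼_a s` and
`(I, s') ⊨ ¬φ`, then `(I, s) ⊨ ¬K_a φ`; moreover `(Ĩ, h(s')) ⊨ ¬φ`, and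
whenever `h(s)` and `h(s')` are reachable in the abstract model,
`h(s) ∼_a h(s')` and `(Ĩ, h(s)) ⊨ ¬K_a φ`. -/
theorem neg_knowledge_reflected {S S' L L' Atom : Type}
    (Reach : S → Prop) (Reach' : S' → Prop)
    (loc : S → L) (loc' : S' → L')
    (val : S → Atom → Bool) (val' : S' → Atom → Bool)
    (h : S → S')
    (hagree : ∀ (s : S) (p : Atom), val s p = val' (h s) p)
    (hloc : ∀ s t : S, loc s = loc t → loc' (h s) = loc' (h t))
    (φ : (Atom → Bool) → Prop)
    (s s' : S)
    (hs : Reach s) (hs' : Reach s') (hacc : loc s' = loc s)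
    (hnφ : ¬ φ (val s')) :
    (¬ ∀ t : S, Reach t → loc t = loc s → φ (val t)) ∧
    (¬ φ (val' (h s'))) ∧
    (Reach' (h s) → Reach' (h s') →
      loc' (h s) = loc' (h s') ∧
      ¬ ∀ t' : S', Reach' t' → loc' t' = loc' (h s) → φ (val' t')) := by
  have hval : (val' (h s')) = val s' := by
    funext p; exact (hagree s' p).symm
  have hnφ' : ¬ φ (val' (h s')) := by rw [hval]; exact hnφ
  refine ⟨fun H => hnφ (H s' hs' hacc), hnφ', fun _ hr' => ?_⟩
  have hl : loc' (h s) = loc' (h s') := (hloc s' s hacc).symm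
  exact ⟨hl, fun H => hnφ' (H (h s') hr' hl.symm)⟩
end
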